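/- Let p be a prime number, ℤ_p the ring of p-adic integers, ℚ_p the field of p-adic numbers, and Λ := ℤ_p[[T]] the ring of formal power series over ℤ_p. Let M be a finitely generated Λ-module such that: (i) the quotient M/TM is torsion-free as a ℤ_p-module, and (ii) ℚ_p ⊗_{ℤ_p} M is a free module of rank one over the ring ℚ_p ⊗_{ℤ_p} Λ. Then M is a free Λ-module of rank one. -/

import Mathlib

open TensorProduct

set_option synthInstance.maxHeartbeats 1000000
set_option maxHeartbeats 1000000

section aux

variable {R K Λ : Type*} [CommRing R] [CommRing K] [Algebra R K]
  [CommRing Λ] [Algebra R Λ]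

open Pointwise in
private lemma aux_span_smul_top (x : Λ) {Y : Type*} [AddCommGroup Y] [Module Λ Y] :
    (Ideal.span {x} : Ideal Λ) • (⊤ : Submodule Λ Y) =
      LinearMap.range (LinearMap.lsmul Λ Y x) := by
  rw [Submodule.ideal_span_singleton_smul]
  ext y
  rw [← Submodule.mem_toAddSubmonoid, Submodule.pointwise_smul_toAddSubmonoid,
    AddSubmonoid.mem_smul_pointwise_iff_exists]
  simp only [Submodule.mem_toAddSubmonoid, Submodule.mem_top, true_and,
    LinearMap.mem_range, LinearMap.lsmul_apply]

private lemma aux_lsmul_eq_rTensor (x : Λ) (Y : Type*) [AddCommGroup Y] [Module Λ Y]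
    [Module R Y] [IsScalarTower R Λ Y] :
    (LinearMap.lsmul Λ (Y ⊗[R] K) x).restrictScalars R =
      LinearMap.rTensor K ((LinearMap.lsmul Λ Y x).restrictScalars R) := by
  apply TensorProduct.ext'
  intro y k
  simp only [LinearMap.coe_restrictScalars, LinearMap.lsmul_apply, LinearMap.rTensor_tmul]
  rw [TensorProduct.smul_tmul']

private lemma aux_range_lsmul_tensor (x : Λ) (Y : Type*) [AddCommGroup Y] [Module Λ Y]
    [Module R Y] [IsScalarTower R Λ Y] :
    (LinearMap.range (LinearMap.lsmul Λ (Y ⊗[R] K) x)).restrictScalars R =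
      LinearMap.range (LinearMap.rTensor K
        (((LinearMap.range (LinearMap.lsmul Λ Y x)).subtype).restrictScalars R)) := by
  have h1 : (LinearMap.range (LinearMap.lsmul Λ (Y ⊗[R] K) x)).restrictScalars R =
      LinearMap.range ((LinearMap.lsmul Λ (Y ⊗[R] K) x).restrictScalars R) := rfl
  rw [h1, aux_lsmul_eq_rTensor]
  have hcomp : (LinearMap.lsmul Λ Y x).restrictScalars R =
      (((LinearMap.range (LinearMap.lsmul Λ Y x)).subtype).restrictScalars R) ∘ₗ
        (((LinearMap.lsmul Λ Y x).rangeRestrict).restrictScalars R) := rfl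
  rw [hcomp, LinearMap.rTensor_comp]
  apply LinearMap.range_comp_of_range_eq_top
  rw [LinearMap.range_eq_top]
  exact LinearMap.rTensor_surjective K
    (fun z => LinearMap.surjective_rangeRestrict (f := LinearMap.lsmul Λ Y x) z)

/-- Key tensor-quotient lemma: `(Y ⊗ K)/x(Y ⊗ K) ≃ (Y/xY) ⊗ K` as `R`-modules. -/
private noncomputable def auxQuotTensor (x : Λ) (Y : Type*) [AddCommGroup Y] [Module Λ Y]
    [Module R Y] [IsScalarTower R Λ Y] :
    ((Y ⊗[R] K) ⧸ LinearMap.range (LinearMap.lsmul Λ (Y ⊗[R] K) x)) ≃ₗ[R]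
      ((Y ⧸ LinearMap.range (LinearMap.lsmul Λ Y x)) ⊗[R] K) := by
  set S : Submodule Λ Y := LinearMap.range (LinearMap.lsmul Λ Y x) with hS
  set S' : Submodule Λ (Y ⊗[R] K) := LinearMap.range (LinearMap.lsmul Λ (Y ⊗[R] K) x) with hS'
  set f : (Y ⊗[R] K) →ₗ[R] ((Y ⧸ S) ⊗[R] K) :=
    LinearMap.rTensor K ((Submodule.mkQ S).restrictScalars R) with hf
  have hsurj : Function.Surjective f :=
    LinearMap.rTensor_surjective K (fun z => Submodule.mkQ_surjective S z)
  have hex : Function.Exact ((S.subtype).restrictScalars R) ((S.mkQ).restrictScalars R) :=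
    LinearMap.exact_subtype_mkQ S
  have hker : S'.restrictScalars R = LinearMap.ker f := by
    have h2 := rTensor_exact (f := (S.subtype).restrictScalars R)
      (g := (S.mkQ).restrictScalars R) K hex (fun z => Submodule.mkQ_surjective S z)
    rw [LinearMap.exact_iff] at h2
    rw [hf, h2, aux_range_lsmul_tensor]
  exact (Submodule.Quotient.restrictScalarsEquiv R S').symm ≪≫ₗ
    (Submodule.quotEquivOfEq _ _ hker) ≪≫ₗ (f.quotKerEquivOfSurjective hsurj)

end aux

/-- `Λ/(X) ≃ R` as `R`-modules. -/
private noncomputable def auxQuotX (R : Type*) [CommRing R] :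
    (PowerSeries R ⧸ LinearMap.range (LinearMap.lsmul (PowerSeries R) (PowerSeries R)
      (PowerSeries.X : PowerSeries R))) ≃ₗ[R] R := by
  set S : Submodule (PowerSeries R) (PowerSeries R) :=
    LinearMap.range (LinearMap.lsmul _ _ (PowerSeries.X : PowerSeries R)) with hS
  have hker : S.restrictScalars R = LinearMap.ker (PowerSeries.coeff (R := R) 0) := by
    ext f
    simp only [hS, Submodule.restrictScalars_mem, LinearMap.mem_range, LinearMap.lsmul_apply,
      LinearMap.mem_ker, PowerSeries.coeff_zero_eq_constantCoeff]
    constructor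
    · rintro ⟨g, rfl⟩
      rw [smul_eq_mul, map_mul, PowerSeries.constantCoeff_X, zero_mul]
    · intro h
      obtain ⟨g, hg⟩ := PowerSeries.X_dvd_iff.mpr h
      exact ⟨g, by rw [smul_eq_mul, ← hg]⟩
  have hsurj : Function.Surjective (PowerSeries.coeff (R := R) 0) := fun r =>
    ⟨PowerSeries.C (R := R) r, by simp⟩
  exact (Submodule.Quotient.restrictScalarsEquiv R S).symm ≪≫ₗ
    Submodule.quotEquivOfEq _ _ hker ≪≫ₗ LinearMap.quotKerEquivOfSurjective _ hsurj

theorem free_rank_one_of_quotient_torsionFree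
    (p : ℕ) [Fact p.Prime]
    (M : Type*) [AddCommGroup M]
    [Module (PowerSeries ℤ_[p]) M] [Module.Finite (PowerSeries ℤ_[p]) M]
    [Module ℤ_[p] M] [IsScalarTower ℤ_[p] (PowerSeries ℤ_[p]) M]
    (htf : Submodule.torsion ℤ_[p]
        (M ⧸ LinearMap.range (LinearMap.lsmul (PowerSeries ℤ_[p]) M
          (PowerSeries.X : PowerSeries ℤ_[p]))) = ⊥)
    (hfree : Nonempty
        ((((PowerSeries ℤ_[p]) ⊗[ℤ_[p]] ℚ_[p]) ⊗[PowerSeries ℤ_[p]] M) ≃ₗ[(PowerSeries ℤ_[p]) ⊗[ℤ_[p]] ℚ_[p]]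
          ((PowerSeries ℤ_[p]) ⊗[ℤ_[p]] ℚ_[p]))) :
    Nonempty (M ≃ₗ[PowerSeries ℤ_[p]] PowerSeries ℤ_[p]) := by
  classical
  set R := ℤ_[p]
  set K := ℚ_[p]
  set Λ := PowerSeries ℤ_[p] with hΛ
  set X : Λ := PowerSeries.X with hX
  set SM : Submodule Λ M := LinearMap.range (LinearMap.lsmul Λ M X) with hSM
  set N := M ⧸ SM with hN
  -- the `Λ`-linear isomorphism `M ⊗[R] K ≃ Λ ⊗[R] K`
  obtain ⟨e⟩ := hfree
  have eΛ : ((Λ ⊗[R] K) ⊗[Λ] M) ≃ₗ[Λ] (Λ ⊗[R] K) := e.restrictScalars Λ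
  have e₂ : (M ⊗[R] K) ≃ₗ[Λ] (Λ ⊗[R] K) :=
    (TensorProduct.AlgebraTensorModule.cancelBaseChange R Λ Λ M K).symm ≪≫ₗ
      (TensorProduct.comm Λ M (Λ ⊗[R] K)) ≪≫ₗ eΛ
  -- the action of `Λ` on `N` is through the constant coefficient
  have hconst : ∀ (f : Λ) (n : N), f • n = (PowerSeries.constantCoeff (R := R) f) • n := by
    intro f n
    obtain ⟨y, rfl⟩ := Submodule.mkQ_surjective SM n
    have h1 : f • (SM.mkQ y) = SM.mkQ (f • y) := rfl
    have h2 : (PowerSeries.constantCoeff (R := R) f) • (SM.mkQ y)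
        = SM.mkQ ((PowerSeries.constantCoeff (R := R) f) • y) := by
      rw [Submodule.mkQ_apply, Submodule.mkQ_apply, Submodule.Quotient.mk_smul]
    rw [h1, h2, ← sub_eq_zero, ← map_sub, Submodule.mkQ_apply, Submodule.Quotient.mk_eq_zero]
    have hc : (PowerSeries.constantCoeff (R := R) f) • y
        = (PowerSeries.C (R := R) (PowerSeries.constantCoeff (R := R) f)) • y := by
      rw [PowerSeries.C_eq_algebraMap, algebraMap_smul]
    rw [hc, ← sub_smul]
    obtain ⟨g, hg⟩ : (X : Λ) ∣ (f - PowerSeries.C (R := R) (PowerSeries.constantCoeff (R := R) f)) := by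
      rw [hX, PowerSeries.X_dvd_iff, map_sub, PowerSeries.constantCoeff_C, sub_self]
    rw [hg, mul_smul]
    exact ⟨g • y, rfl⟩
  -- `N` is a finitely generated `R`-module
  haveI hNfin : Module.Finite R N := by
    obtain ⟨s, hs⟩ := Module.Finite.fg_top (R := Λ) (M := M)
    rw [Module.finite_def]
    refine ⟨s.image (fun y => SM.mkQ y), ?_⟩
    rw [eq_top_iff]
    rintro n -
    obtain ⟨y, rfl⟩ := Submodule.mkQ_surjective SM n
    have hy : y ∈ Submodule.span Λ (s : Set M) := by rw [hs]; trivial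
    induction hy using Submodule.span_induction with
    | mem z hz =>
      exact Submodule.subset_span (by
        simp only [Finset.coe_image, Set.mem_image, Finset.mem_coe]
        exact ⟨z, hz, rfl⟩)
    | zero => rw [map_zero]; exact Submodule.zero_mem _
    | add a b _ _ ha hb => rw [map_add]; exact Submodule.add_mem _ ha hb
    | smul f a _ ha =>
      have : SM.mkQ (f • a) = (PowerSeries.constantCoeff (R := R) f) • SM.mkQ a := by
        rw [← hconst]; rfl
      rw [this]
      exact Submodule.smul_mem _ _ ha
  -- `N` is torsion-free, hence free
  haveI hNtf : Module.IsTorsionFree R N :=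
    Submodule.isTorsionFree_iff_torsion_eq_bot.mpr htf
  haveI hNfree : Module.Free R N := Module.free_of_finite_type_torsion_free'
  -- the `R`-linear isomorphism `K ⊗[R] N ≃ K`
  have hmapS : (LinearMap.range (LinearMap.lsmul Λ (M ⊗[R] K) X)).map
      (e₂ : (M ⊗[R] K) →ₗ[Λ] (Λ ⊗[R] K)) = LinearMap.range (LinearMap.lsmul Λ (Λ ⊗[R] K) X) := by
    rw [← LinearMap.range_comp]
    have : (e₂ : (M ⊗[R] K) →ₗ[Λ] (Λ ⊗[R] K)) ∘ₗ LinearMap.lsmul Λ (M ⊗[R] K) X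
        = LinearMap.lsmul Λ (Λ ⊗[R] K) X ∘ₗ (e₂ : (M ⊗[R] K) →ₗ[Λ] (Λ ⊗[R] K)) := by
      refine LinearMap.ext fun t => ?_
      simp only [LinearMap.coe_comp, Function.comp_apply, LinearMap.lsmul_apply,
        LinearEquiv.coe_coe, map_smul]
    rw [this, LinearMap.range_comp, LinearEquiv.range, Submodule.map_top]
  have qe : ((M ⊗[R] K) ⧸ LinearMap.range (LinearMap.lsmul Λ (M ⊗[R] K) X)) ≃ₗ[Λ]
      ((Λ ⊗[R] K) ⧸ LinearMap.range (LinearMap.lsmul Λ (Λ ⊗[R] K) X)) :=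
    Submodule.Quotient.equiv _ _ e₂ hmapS
  have u : (K ⊗[R] N) ≃ₗ[R] K :=
    (TensorProduct.comm R K N) ≪≫ₗ (auxQuotTensor X M).symm ≪≫ₗ (qe.restrictScalars R)
      ≪≫ₗ (auxQuotTensor X Λ) ≪≫ₗ
      (TensorProduct.congr (auxQuotX R) (LinearEquiv.refl R K)) ≪≫ₗ (TensorProduct.lid R K)
  -- upgrade to a `K`-linear isomorphism and compute the rank of `N`
  have uK : (K ⊗[R] N) ≃ₗ[K] K := by
    refine LinearEquiv.ofBijective
      (LinearMap.extendScalarsOfIsLocalization (nonZeroDivisors R) K u.toLinearMap) ?_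
    exact u.bijective
  have hrank : Module.finrank R N = 1 := by
    have h1 : Module.finrank K (K ⊗[R] N) = Module.finrank R N := Module.finrank_baseChange
    have h2 : Module.finrank K (K ⊗[R] N) = 1 := by
      rw [uK.finrank_eq, Module.finrank_self]
    omega
  -- a generator of `N`
  have hcard : Module.finrank R N = Fintype.card (Module.Free.ChooseBasisIndex R N) :=
    Module.finrank_eq_card_chooseBasisIndex R N
  obtain ⟨i₀, hi₀⟩ := Fintype.card_eq_one_iff.mp (by rw [← hcard, hrank])
  set b := Module.Free.chooseBasis R N with hb
  have hspanN : Submodule.span R {b i₀} = ⊤ := by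
    haveI : Unique (Module.Free.ChooseBasisIndex R N) := ⟨⟨i₀⟩, hi₀⟩
    have : Set.range ⇑b = {b i₀} := by
      rw [Set.range_unique, hi₀ default]
    rw [← this, b.span_eq]
  obtain ⟨m, hm⟩ := Submodule.mkQ_surjective SM (b i₀)
  -- Nakayama: `m` generates `M` over `Λ`
  have hM : (⊤ : Submodule Λ M) ≤ Submodule.span Λ {m} ⊔ (Ideal.span {X}) • ⊤ := by
    rintro y -
    have : SM.mkQ y ∈ Submodule.span R {b i₀} := hspanN ▸ Submodule.mem_top
    obtain ⟨r, hr⟩ := Submodule.mem_span_singleton.mp this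
    have hy : y - (algebraMap R Λ r) • m ∈ SM := by
      rw [← Submodule.Quotient.mk_eq_zero, ← Submodule.mkQ_apply, map_sub]
      have : SM.mkQ ((algebraMap R Λ r) • m) = r • SM.mkQ m := by
        rw [algebraMap_smul, Submodule.mkQ_apply, Submodule.mkQ_apply,
          Submodule.Quotient.mk_smul]
      rw [this, hm, hr, sub_self]
    have h1 : (algebraMap R Λ r) • m ∈ Submodule.span Λ {m} :=
      Submodule.smul_mem _ _ (Submodule.mem_span_singleton_self m)
    have h2 : y - (algebraMap R Λ r) • m ∈ (Ideal.span {X} : Ideal Λ) • (⊤ : Submodule Λ M) := by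
      rw [aux_span_smul_top]; exact hy
    have := Submodule.add_mem_sup h1 h2
    rwa [add_sub_cancel] at this
  have hjac : (Ideal.span {X} : Ideal Λ) ≤ Ideal.jacobson ⊥ := by
    rw [IsLocalRing.jacobson_eq_maximalIdeal ⊥ bot_ne_top, Ideal.span_le]
    rintro z hz
    rw [Set.mem_singleton_iff] at hz
    subst hz
    rw [SetLike.mem_coe, IsLocalRing.mem_maximalIdeal, mem_nonunits_iff,
      PowerSeries.isUnit_iff_constantCoeff, hX, PowerSeries.constantCoeff_X]
    exact not_isUnit_zero
  have htop : Submodule.span Λ {m} = ⊤ := by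
    have hfg : (⊤ : Submodule Λ M).FG := Module.finite_def.mp inferInstance
    have h := Submodule.sup_smul_eq_sup_smul_of_le_smul_of_le_jacobson hfg hjac hM
    rw [Submodule.bot_smul] at h
    have h2 : (⊤ : Submodule Λ M) ≤ Submodule.span Λ {m} := by
      intro y hy
      have := hM hy
      rw [h, sup_bot_eq] at this
      exact this
    exact top_le_iff.mp h2
  -- the map `Λ → M`, `f ↦ f • m`, is bijective
  set φ : Λ →ₗ[Λ] M := LinearMap.toSpanSingleton Λ M m with hφ
  have hφsurj : Function.Surjective φ := by
    rw [← LinearMap.range_eq_top, ← LinearMap.span_singleton_eq_range]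
    exact htop
  have hφinj : Function.Injective φ := by
    rw [← LinearMap.ker_eq_bot]
    rw [Submodule.eq_bot_iff]
    intro a ha
    rw [LinearMap.mem_ker] at ha
    have ham : a • m = 0 := ha
    have hann : ∀ y : M, a • y = 0 := by
      intro y
      have : y ∈ Submodule.span Λ {m} := htop ▸ Submodule.mem_top
      obtain ⟨f, rfl⟩ := Submodule.mem_span_singleton.mp this
      rw [smul_smul, mul_comm, ← smul_smul, ham, smul_zero]
    have h0 : ∀ t : M ⊗[R] K, a • t = 0 := by
      intro t
      induction t with
      | zero => rw [smul_zero]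
      | tmul y k => rw [TensorProduct.smul_tmul', hann, TensorProduct.zero_tmul]
      | add t1 t2 h1 h2 => rw [smul_add, h1, h2, add_zero]
    have htens : (a ⊗ₜ (1 : K) : Λ ⊗[R] K) = 0 := by
      have h1 : a • (((1 : Λ) ⊗ₜ (1 : K)) : Λ ⊗[R] K) = a ⊗ₜ (1 : K) := by
        rw [TensorProduct.smul_tmul', smul_eq_mul, mul_one]
      rw [← h1, ← e₂.apply_symm_apply ((1 : Λ) ⊗ₜ (1 : K)), ← map_smul, h0, map_zero]
    ext n
    have hc := congrArg (fun t => (TensorProduct.lid R K)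
      (LinearMap.rTensor K (PowerSeries.coeff (R := R) n) t)) htens
    simp only [LinearMap.rTensor_tmul, TensorProduct.lid_tmul, map_zero, smul_eq_zero] at hc
    have halg : (algebraMap R K) (PowerSeries.coeff (R := R) n a) = (algebraMap R K) 0 := by
      rw [map_zero, Algebra.algebraMap_eq_smul_one]
      simpa using hc
    have := IsFractionRing.injective R K halg
    simpa using this
  exact ⟨(LinearEquiv.ofBijective φ ⟨hφinj, hφsurj⟩).symm⟩
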